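/- Let 𝒢 : (0, c₀) → ℝ be a positive C¹ function satisfying lim_{ρ→0⁺} ρ · log(1/ρ) · (-𝒢'(ρ))/𝒢(ρ) = γ for some γ ≥ 0. Then for every ε > 0 there exist constants C_ε > 0 and ρ_ε ∈ (0, min(c₀,1)) such that 𝒢(ρ) ≤ C_ε (log(1/ρ))^{γ+ε} for all ρ ∈ (0, ρ_ε]. -/

import Mathlib

open Set Filter Topology

/-- logarithmic upper bound `𝒢(ρ) ≤ C_ε (log(1/ρ))^{γ+ε}` near `0`. -/
theorem stmt13 (𝒢 𝒢' : ℝ → ℝ) (c₀ γ : ℝ) (hc₀ : 0 < c₀) (hγ : 0 ≤ γ)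
    (hderiv : ∀ ρ ∈ Set.Ioo (0:ℝ) c₀, HasDerivAt 𝒢 (𝒢' ρ) ρ)
    (hcont : ContinuousOn 𝒢' (Set.Ioo 0 c₀))
    (hpos : ∀ ρ ∈ Set.Ioo (0:ℝ) c₀, 0 < 𝒢 ρ)
    (hlim : Tendsto (fun ρ => ρ * Real.log (1 / ρ) * (-𝒢' ρ) / 𝒢 ρ) (𝓝[>] 0) (𝓝 γ)) :
    ∀ ε > (0:ℝ), ∃ Cε > (0:ℝ), ∃ ρε ∈ Set.Ioo (0:ℝ) (min c₀ 1),
      ∀ ρ ∈ Set.Ioc (0:ℝ) ρε, 𝒢 ρ ≤ Cε * Real.log (1 / ρ) ^ (γ + ε) := by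
  intro ε hε
  have hγε : 0 < γ + ε := by linarith
  -- eventual bound on the ratio
  have hev : ∀ᶠ ρ in 𝓝[>] (0:ℝ),
      ρ * Real.log (1 / ρ) * (-𝒢' ρ) / 𝒢 ρ < γ + ε :=
    hlim.eventually_lt_const (by linarith)
  obtain ⟨δ, hδmem, hδ⟩ := mem_nhdsGT_iff_exists_Ioo_subset.1 hev
  have hδ0 : (0:ℝ) < δ := hδmem
  set m : ℝ := min c₀ 1 with hm
  have hm0 : (0:ℝ) < m := lt_min hc₀ one_pos
  set ρε : ℝ := min δ m / 2 with hρε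
  have hρε0 : 0 < ρε := by positivity
  have hρεδ : ρε < δ := by
    have : min δ m ≤ δ := min_le_left _ _
    simp only [hρε]; linarith
  have hρεm : ρε < m := by
    have : min δ m ≤ m := min_le_right _ _
    simp only [hρε]; linarith
  have hρεc₀ : ρε < c₀ := lt_of_lt_of_le hρεm (min_le_left _ _)
  have hρε1 : ρε < 1 := lt_of_lt_of_le hρεm (min_le_right _ _)
  -- basic facts for ρ ∈ Ioc 0 ρε
  have hmemIoo : ∀ ρ ∈ Set.Ioc (0:ℝ) ρε, ρ ∈ Set.Ioo (0:ℝ) c₀ := fun ρ hρ =>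
    ⟨hρ.1, lt_of_le_of_lt hρ.2 hρεc₀⟩
  have hlogneg : ∀ ρ ∈ Set.Ioc (0:ℝ) ρε, Real.log ρ < 0 := fun ρ hρ =>
    Real.log_neg hρ.1 (lt_of_le_of_lt hρ.2 hρε1)
  -- the auxiliary function H
  set H : ℝ → ℝ := fun ρ => Real.log (𝒢 ρ) - (γ + ε) * Real.log (-Real.log ρ) with hH
  have hHderiv : ∀ x ∈ Set.Ioc (0:ℝ) ρε,
      HasDerivAt H (𝒢' x / 𝒢 x - (γ + ε) * (-x⁻¹ / -Real.log x)) x := by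
    intro x hx
    have hx0 : 0 < x := hx.1
    have hxc : x ∈ Set.Ioo (0:ℝ) c₀ := hmemIoo x hx
    have hlx : Real.log x < 0 := hlogneg x hx
    have h1 : HasDerivAt (fun ρ => Real.log (𝒢 ρ)) (𝒢' x / 𝒢 x) x :=
      (hderiv x hxc).log (hpos x hxc).ne'
    have h2 : HasDerivAt (fun ρ => -Real.log ρ) (-x⁻¹) x :=
      (Real.hasDerivAt_log hx0.ne').neg
    have h3 : HasDerivAt (fun ρ => Real.log (-Real.log ρ)) (-x⁻¹ / -Real.log x) x :=
      h2.log (by simpa using hlx.ne)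
    exact h1.sub (h3.const_mul (γ + ε))
  -- positivity of the derivative on the interior
  have hderivpos : ∀ x ∈ Set.Ioo (0:ℝ) ρε,
      0 < 𝒢' x / 𝒢 x - (γ + ε) * (-x⁻¹ / -Real.log x) := by
    intro x hx
    have hx' : x ∈ Set.Ioc (0:ℝ) ρε := ⟨hx.1, hx.2.le⟩
    have hx0 : 0 < x := hx.1
    have hb : 0 < 𝒢 x := hpos x (hmemIoo x hx')
    have hlx : Real.log x < 0 := hlogneg x hx'
    have hlt : x * Real.log (1 / x) * (-𝒢' x) / 𝒢 x < γ + ε :=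
      hδ ⟨hx0, lt_trans hx.2 hρεδ⟩
    rw [one_div, Real.log_inv] at hlt
    rw [div_lt_iff₀ hb] at hlt
    have hxlx : 0 < x * -Real.log x := mul_pos hx0 (neg_pos.2 hlx)
    have hrw : 𝒢' x / 𝒢 x - (γ + ε) * (-x⁻¹ / -Real.log x)
        = ((γ + ε) * 𝒢 x - x * -Real.log x * -𝒢' x) / (𝒢 x * (x * -Real.log x)) := by
      have h1 : x ≠ 0 := hx0.ne'
      have h2 : Real.log x ≠ 0 := hlx.ne
      have h3 : 𝒢 x ≠ 0 := hb.ne'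
      field_simp
      ring
    rw [hrw]
    exact div_pos (by linarith) (mul_pos hb hxlx)
  -- monotonicity
  have hmono : StrictMonoOn H (Set.Ioc (0:ℝ) ρε) := by
    apply StrictMonoOn.mono (s := Set.Ioc (0:ℝ) ρε) ?_ (subset_refl _)
    apply strictMonoOn_of_deriv_pos (convex_Ioc _ _)
    · intro x hx
      exact (hHderiv x hx).continuousAt.continuousWithinAt
    · intro x hx
      rw [interior_Ioc] at hx
      rw [(hHderiv x ⟨hx.1, hx.2.le⟩).deriv]
      exact hderivpos x hx
  -- conclusion
  have hρεIoc : ρε ∈ Set.Ioc (0:ℝ) ρε := ⟨hρε0, le_refl _⟩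
  have hlρε : 0 < -Real.log ρε := neg_pos.2 (hlogneg ρε hρεIoc)
  have hGρε : 0 < 𝒢 ρε := hpos ρε (hmemIoo ρε hρεIoc)
  refine ⟨𝒢 ρε * (-Real.log ρε) ^ (-(γ + ε)), ?_, ρε, ⟨hρε0, hρεm⟩, ?_⟩
  · exact mul_pos hGρε (Real.rpow_pos_of_pos hlρε _)
  intro ρ hρ
  have hG : 0 < 𝒢 ρ := hpos ρ (hmemIoo ρ hρ)
  have hlρ : 0 < -Real.log ρ := neg_pos.2 (hlogneg ρ hρ)
  have hHle : H ρ ≤ H ρε := by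
    rcases eq_or_lt_of_le hρ.2 with h | h
    · rw [h]
    · exact (hmono hρ hρεIoc h).le
  have key : 𝒢 ρ ≤ Real.exp (H ρε + (γ + ε) * Real.log (-Real.log ρ)) := by
    have : 𝒢 ρ = Real.exp (H ρ + (γ + ε) * Real.log (-Real.log ρ)) := by
      rw [hH]; simp only [sub_add_cancel]; rw [Real.exp_log hG]
    rw [this]
    exact Real.exp_le_exp.2 (add_le_add_left hHle _)
  have hrw : Real.exp (H ρε + (γ + ε) * Real.log (-Real.log ρ))
      = 𝒢 ρε * (-Real.log ρε) ^ (-(γ + ε)) * (-Real.log ρ) ^ (γ + ε) := by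
    rw [Real.exp_add, hH]
    rw [Real.rpow_def_of_pos hlρ, Real.rpow_def_of_pos hlρε, Real.exp_sub,
      Real.exp_log hGρε]
    rw [mul_comm (Real.log (-Real.log ρ)) (γ + ε),
      mul_comm (Real.log (-Real.log ρε)) (-(γ + ε))]
    rw [neg_mul, Real.exp_neg]
    ring
  rw [one_div, Real.log_inv]
  calc 𝒢 ρ ≤ _ := key
    _ = _ := hrw
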